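/- Let f : H → G be a homomorphism of Hilbert algebras, I ∈ X*(G) and J ∈ X*(H) such that f⁻¹(I) ⊆ J. Then there exists K ∈ X*(G) such that I ⊆ K and f⁻¹(K) = J. -/

import Mathlib

/-- A Hilbert algebra `(H, →, 1)`. -/
structure HilbertAlgebra (H : Type*) where
  imp : H → H → H
  one : H
  ax1 : ∀ a b : H, imp a (imp b a) = one
  ax2 : ∀ a b c : H, imp (imp a (imp b c)) (imp (imp a b) (imp a c)) = one
  ax3 : ∀ a b : H, imp a b = one → imp b a = one → a = b

namespace HilbertAlgebra

variable {H : Type*} (hH : HilbertAlgebra H)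

/-- The natural order: `a ≤ b` iff `a → b = 1`. -/
def le (a b : H) : Prop := hH.imp a b = hH.one

/-- Implicative filter. -/
def IsImplicativeFilter (F : Set H) : Prop :=
  hH.one ∈ F ∧ ∀ a b : H, a ∈ F → hH.imp a b ∈ F → b ∈ F

/-- Irreducible implicative filter. -/
def IsIrreducible (F : Set H) : Prop :=
  hH.IsImplicativeFilter F ∧ F ≠ Set.univ ∧
    ∀ F₁ F₂ : Set H, hH.IsImplicativeFilter F₁ → hH.IsImplicativeFilter F₂ →
      F = F₁ ∩ F₂ → (F = F₁ ∨ F = F₂)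

/-- Order-ideal: nonempty, downward closed, up-directed (w.r.t. the natural order). -/
def IsOrderIdeal (I : Set H) : Prop :=
  I.Nonempty ∧ (∀ a b : H, b ∈ I → hH.le a b → a ∈ I) ∧
    ∀ a b : H, a ∈ I → b ∈ I → ∃ c ∈ I, hH.le a c ∧ hH.le b c

/-- `φ(a) = {P ∈ X(H) : a ∈ P}`. -/
def phi (a : H) : Set (Set H) := {P | hH.IsIrreducible P ∧ a ∈ P}

/-- An upset of `X(H)` (the poset of irreducible implicative filters, ordered by `⊆`). -/
def IsUpsetX (U : Set (Set H)) : Prop :=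
  (∀ P ∈ U, hH.IsIrreducible P) ∧
    ∀ P Q : Set H, P ∈ U → hH.IsIrreducible Q → P ⊆ Q → Q ∈ U

/-- The Heyting implication `U ⇒ V` on upsets of `X(H)`. -/
def impUps (U V : Set (Set H)) : Set (Set H) :=
  {P | hH.IsIrreducible P ∧ ∀ Q : Set H, hH.IsIrreducible Q → P ⊆ Q → Q ∈ U → Q ∈ V}

/-- `FC(H)`: finite nonempty intersections of sets of the form `φ(a)`. -/
def FC : Set (Set (Set H)) :=
  {U | ∃ l : List H, l ≠ [] ∧ U = ⋂ a ∈ l, hH.phi a}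

/-- `X*(H)`: implicative filters that are intersections of finitely many (at least one)
irreducible implicative filters. -/
def XStar : Set (Set H) :=
  {F | ∃ S : Set (Set H), S.Finite ∧ S.Nonempty ∧ (∀ P ∈ S, hH.IsIrreducible P) ∧ F = ⋂₀ S}

/-- `Φ(a) = {F ∈ X*(H) : a ∈ F}`. -/
def Phi (a : H) : Set (Set H) := {F | F ∈ hH.XStar ∧ a ∈ F}

/-- An upset of `X*(H)` (ordered by `⊆`). -/
def IsUpsetXStar (U : Set (Set H)) : Prop :=
  (∀ F ∈ U, F ∈ hH.XStar) ∧
    ∀ F K : Set H, F ∈ U → K ∈ hH.XStar → F ⊆ K → K ∈ U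

/-- The implication `U ⇒ V` on upsets of `X*(H)`. -/
def impUpsStar (U V : Set (Set H)) : Set (Set H) :=
  {F | F ∈ hH.XStar ∧ ∀ K : Set H, K ∈ hH.XStar → F ⊆ K → K ∈ U → K ∈ V}

/-- Homomorphism of Hilbert algebras. -/
def IsHom {G : Type*} (hG : HilbertAlgebra G) (f : H → G) : Prop :=
  f hH.one = hG.one ∧ ∀ a b : H, f (hH.imp a b) = hG.imp (f a) (f b)

end HilbertAlgebra

/-- A Hilbert algebra with supremum: `(H, ∨)` is a join-semilattice whose induced
order has greatest element `1`, and `a → b = 1` iff `a ∨ b = b`. -/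
structure HilbertSup (H : Type*) extends HilbertAlgebra H where
  sup : H → H → H
  sup_comm : ∀ a b : H, sup a b = sup b a
  sup_assoc : ∀ a b c : H, sup (sup a b) c = sup a (sup b c)
  sup_idem : ∀ a : H, sup a a = a
  sup_one : ∀ a : H, sup a one = one
  imp_eq_one_iff : ∀ a b : H, imp a b = one ↔ sup a b = b

/-- Morphism of Hilbert algebras with supremum. -/
def HilbertSup.IsHomSup {H G : Type*} (hH : HilbertSup H) (hG : HilbertSup G)
    (f : H → G) : Prop :=
  hH.toHilbertAlgebra.IsHom hG.toHilbertAlgebra f ∧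
    ∀ a b : H, f (hH.sup a b) = hG.sup (f a) (f b)

/-- An implicative semilattice: a meet-semilattice with greatest element and a binary
operation `him` such that `a ⊓ b ≤ c ↔ a ≤ him b c`. -/
class ImplicativeSemilattice (G : Type*) extends SemilatticeInf G, OrderTop G where
  him : G → G → G
  inf_le_iff_le_him : ∀ a b c : G, a ⊓ b ≤ c ↔ a ≤ him b c

namespace HilbertAlgebra

variable {H : Type*}

lemma imp_one (hH : HilbertAlgebra H) (a : H) : hH.imp a hH.one = hH.one := by
  have key : ∀ w v : H, hH.imp (hH.imp w v) hH.one = hH.one := by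
    intro w v
    have h1 : hH.imp (hH.imp w v) (hH.imp v (hH.imp w v)) = hH.one := hH.ax1 _ _
    have h2 : hH.imp v (hH.imp w v) = hH.one := hH.ax1 _ _
    rw [h2] at h1; exact h1
  exact hH.ax3 _ _ (key a hH.one) (hH.ax1 _ _)

lemma mp (hH : HilbertAlgebra H) {a b : H} (ha : a = hH.one)
    (hab : hH.imp a b = hH.one) : b = hH.one := by
  rw [ha] at hab
  exact hH.ax3 b hH.one (hH.imp_one b) hab

lemma imp_self (hH : HilbertAlgebra H) (a : H) : hH.imp a a = hH.one := by
  have h1 := hH.ax2 a (hH.imp a a) a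
  have h2 : hH.imp a (hH.imp (hH.imp a a) a) = hH.one := hH.ax1 _ _
  exact hH.mp (hH.ax1 a a) (hH.mp h2 h1)

lemma one_imp (hH : HilbertAlgebra H) (a : H) : hH.imp hH.one a = a := by
  apply hH.ax3
  · have h1 := hH.ax2 (hH.imp hH.one a) hH.one a
    have h2 := hH.mp (hH.imp_self (hH.imp hH.one a)) h1
    exact hH.mp (hH.imp_one _) h2
  · exact hH.ax1 a hH.one

lemma mono (hH : HilbertAlgebra H) {b c : H} (h : hH.imp b c = hH.one) (a : H) :
    hH.imp (hH.imp a b) (hH.imp a c) = hH.one := by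
  have h1 := hH.ax2 a b c
  have h2 : hH.imp a (hH.imp b c) = hH.one := by rw [h]; exact hH.imp_one a
  exact hH.mp h2 h1

lemma le_trans' (hH : HilbertAlgebra H) {a b c : H} (h1 : hH.imp a b = hH.one)
    (h2 : hH.imp b c = hH.one) : hH.imp a c = hH.one :=
  hH.mp h1 (hH.mono h2 a)

lemma antitone' (hH : HilbertAlgebra H) {a b : H} (h : hH.imp a b = hH.one) (c : H) :
    hH.imp (hH.imp b c) (hH.imp a c) = hH.one := by
  have h1 : hH.imp (hH.imp b c) (hH.imp a (hH.imp b c)) = hH.one := hH.ax1 _ _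
  have h2 := hH.ax2 a b c
  have h3 := hH.le_trans' h1 h2
  rw [h, hH.one_imp] at h3
  exact h3

lemma exchange_le (hH : HilbertAlgebra H) (x y z : H) :
    hH.imp (hH.imp x (hH.imp y z)) (hH.imp y (hH.imp x z)) = hH.one := by
  have h1 := hH.ax2 x y z
  have h2 := hH.antitone' (hH.ax1 y x) (hH.imp x z)
  exact hH.le_trans' h1 h2

lemma exchange (hH : HilbertAlgebra H) (x y z : H) :
    hH.imp x (hH.imp y z) = hH.imp y (hH.imp x z) :=
  hH.ax3 _ _ (hH.exchange_le x y z) (hH.exchange_le y x z)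

lemma mem_of_le (hH : HilbertAlgebra H) {F : Set H} (hF : hH.IsImplicativeFilter F)
    {a b : H} (ha : a ∈ F) (h : hH.imp a b = hH.one) : b ∈ F := by
  apply hF.2 a b ha; rw [h]; exact hF.1

lemma mono_foldr (hH : HilbertAlgebra H) {u v : H} (h : hH.imp u v = hH.one)
    (l : List H) :
    hH.imp (l.foldr hH.imp u) (l.foldr hH.imp v) = hH.one := by
  induction l with
  | nil => exact h
  | cons x l ih => exact hH.mono ih x

lemma aux_L3 (hH : HilbertAlgebra H) (a b : H) (l : List H) :
    hH.imp (l.foldr hH.imp a) (hH.imp (hH.imp a b) (l.foldr hH.imp b)) = hH.one := by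
  induction l with
  | nil =>
    show hH.imp a (hH.imp (hH.imp a b) b) = hH.one
    rw [hH.exchange]
    exact hH.imp_self _
  | cons x l ih =>
    show hH.imp (hH.imp x (l.foldr hH.imp a))
      (hH.imp (hH.imp a b) (hH.imp x (l.foldr hH.imp b))) = hH.one
    rw [hH.exchange (hH.imp a b) x]
    exact hH.mono ih x

lemma mp_foldr (hH : HilbertAlgebra H) {a b : H} {l m : List H}
    (hl : l.foldr hH.imp a = hH.one) (hm : m.foldr hH.imp (hH.imp a b) = hH.one) :
    (m ++ l).foldr hH.imp b = hH.one := by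
  have h1 := hH.aux_L3 a b l
  rw [hl, hH.one_imp] at h1
  have h2 := hH.mono_foldr h1 m
  have h3 := hH.mp hm h2
  rw [List.foldr_append]
  exact h3

lemma foldr_perm (hH : HilbertAlgebra H) {l l' : List H} (h : l.Perm l') (b : H) :
    l.foldr hH.imp b = l'.foldr hH.imp b := by
  induction h with
  | nil => rfl
  | cons x h ih => show hH.imp x _ = hH.imp x _; rw [ih]
  | swap x y l => exact hH.exchange y x _
  | trans h1 h2 ih1 ih2 => rw [ih1, ih2]

lemma foldr_mem (hH : HilbertAlgebra H) {F : Set H} (hF : hH.IsImplicativeFilter F)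
    {l : List H} {b : H} (hl : ∀ x ∈ l, x ∈ F) (hb : l.foldr hH.imp b ∈ F) : b ∈ F := by
  induction l with
  | nil => exact hb
  | cons x l ih =>
    exact ih (fun y hy => hl y (List.mem_cons_of_mem _ hy))
      (hF.2 x _ (hl x (List.mem_cons_self)) hb)

/-- The implicative filter generated by a set. -/
def genMem (hH : HilbertAlgebra H) (X : Set H) : Set H :=
  {b | ∃ l : List H, (∀ x ∈ l, x ∈ X) ∧ l.foldr hH.imp b = hH.one}

lemma subset_genMem (hH : HilbertAlgebra H) (X : Set H) : X ⊆ hH.genMem X :=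
  fun a ha => ⟨[a], by simpa using ha, hH.imp_self a⟩

lemma genMem_filter (hH : HilbertAlgebra H) (X : Set H) :
    hH.IsImplicativeFilter (hH.genMem X) := by
  constructor
  · exact ⟨[], by simp, rfl⟩
  · rintro a b ⟨l, hlX, hl⟩ ⟨m, hmX, hm⟩
    refine ⟨m ++ l, ?_, hH.mp_foldr hl hm⟩
    intro x hx
    rcases List.mem_append.1 hx with h | h
    exacts [hmX x h, hlX x h]

lemma sInter_filter (hH : HilbertAlgebra H) {S : Set (Set H)} (hne : S.Nonempty)
    (h : ∀ F ∈ S, hH.IsImplicativeFilter F) : hH.IsImplicativeFilter (⋂₀ S) := by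
  constructor
  · exact fun F hF => (h F hF).1
  · intro a b ha hab F hF
    exact (h F hF).2 a b (ha F hF) (hab F hF)

lemma irr_directed (hH : HilbertAlgebra H) {P : Set H} (hP : hH.IsIrreducible P)
    {a b : H} (ha : a ∉ P) (hb : b ∉ P) :
    ∃ c, c ∉ P ∧ hH.imp a c ∈ P ∧ hH.imp b c ∈ P := by
  by_contra hcon
  push_neg at hcon
  have hPf := hP.1
  have filt : ∀ u : H, hH.IsImplicativeFilter {x | hH.imp u x ∈ P} := by
    intro u
    constructor
    · show hH.imp u hH.one ∈ P
      rw [hH.imp_one]; exact hPf.1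
    · intro x y hx hxy
      have h1 := hH.ax2 u x y
      have h2 : hH.imp (hH.imp u (hH.imp x y))
          (hH.imp (hH.imp u x) (hH.imp u y)) ∈ P := by rw [h1]; exact hPf.1
      exact hPf.2 _ _ hx (hPf.2 _ _ hxy h2)
  have hsub : ∀ u : H, P ⊆ {x | hH.imp u x ∈ P} := fun u x hx =>
    hH.mem_of_le hPf hx (hH.ax1 x u)
  have heq : P = {x | hH.imp a x ∈ P} ∩ {x | hH.imp b x ∈ P} := by
    ext x
    constructor
    · intro hx; exact ⟨hsub a hx, hsub b hx⟩
    · rintro ⟨h1, h2⟩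
      by_contra hx
      exact hcon x hx h1 h2
  rcases hP.2.2 _ _ (filt a) (filt b) heq with h | h
  · refine ha ?_
    rw [h]; show hH.imp a a ∈ P; rw [hH.imp_self]; exact hPf.1
  · refine hb ?_
    rw [h]; show hH.imp b b ∈ P; rw [hH.imp_self]; exact hPf.1

lemma exists_partition {α : Type*} (A B : Set α) :
    ∀ l : List α, (∀ x ∈ l, x ∈ A ∪ B) →
      ∃ la lb : List α, (∀ x ∈ la, x ∈ A) ∧ (∀ x ∈ lb, x ∈ B) ∧ l.Perm (la ++ lb) := by
  intro l
  induction l with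
  | nil => exact fun _ => ⟨[], [], by simp, by simp, List.Perm.refl _⟩
  | cons x l ih =>
    intro h
    obtain ⟨la, lb, h1, h2, h3⟩ := ih fun y hy => h y (List.mem_cons_of_mem _ hy)
    rcases h x (List.mem_cons_self) with hx | hx
    · refine ⟨x :: la, lb, ?_, h2, h3.cons x⟩
      intro y hy
      rcases List.mem_cons.1 hy with rfl | hy
      exacts [hx, h1 y hy]
    · refine ⟨la, x :: lb, h1, ?_, (h3.cons x).trans List.perm_middle.symm⟩
      intro y hy
      rcases List.mem_cons.1 hy with rfl | hy
      exacts [hx, h2 y hy]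

lemma exists_preimage_list {α β : Type*} (f : α → β) (P : Set α) :
    ∀ lb : List β, (∀ x ∈ lb, x ∈ f '' P) →
      ∃ lq : List α, (∀ x ∈ lq, x ∈ P) ∧ lb = lq.map f := by
  intro lb
  induction lb with
  | nil => exact fun _ => ⟨[], by simp, rfl⟩
  | cons x lb ih =>
    intro h
    obtain ⟨lq, h1, h2⟩ := ih fun y hy => h y (List.mem_cons_of_mem _ hy)
    obtain ⟨p, hp, rfl⟩ := h x (List.mem_cons_self)
    refine ⟨p :: lq, ?_, by simp [h2]⟩
    intro y hy
    rcases List.mem_cons.1 hy with rfl | hy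
    exacts [hp, h1 y hy]

lemma foldr_map {G : Type*} (hH : HilbertAlgebra H) (hG : HilbertAlgebra G)
    (f : H → G) (hf : hH.IsHom hG f) (a : H) (lq : List H) :
    (lq.map f).foldr hG.imp (f a) = f (lq.foldr hH.imp a) := by
  induction lq with
  | nil => rfl
  | cons x lq ih =>
    show hG.imp (f x) ((lq.map f).foldr hG.imp (f a)) = f (hH.imp x (lq.foldr hH.imp a))
    rw [ih, hf.2]

lemma key_ext {G : Type*} (hH : HilbertAlgebra H) (hG : HilbertAlgebra G) (f : H → G)
    (hf : hH.IsHom hG f) {I : Set G} (hIf : hG.IsImplicativeFilter I)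
    {P : Set H} (hP : hH.IsIrreducible P) (hIP : f ⁻¹' I ⊆ P) :
    ∃ Q : Set G, hG.IsIrreducible Q ∧ I ⊆ Q ∧ f ⁻¹' Q = P := by
  set D : Set G := hG.genMem (I ∪ f '' P) with hD
  have hdisj : ∀ a : H, a ∉ P → f a ∉ D := by
    rintro a haP ⟨l, hlX, hl⟩
    obtain ⟨la, lb, hla, hlb, hperm⟩ := exists_partition I (f '' P) l hlX
    rw [hG.foldr_perm hperm] at hl
    obtain ⟨lq, hlq, rfl⟩ := exists_preimage_list f P lb hlb
    rw [List.foldr_append, foldr_map hH hG f hf] at hl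
    have h1 : f (lq.foldr hH.imp a) ∈ I :=
      hG.foldr_mem hIf hla (hl.symm ▸ hIf.1)
    exact haP (hH.foldr_mem hP.1 hlq (hIP h1))
  set S : Set (Set G) :=
    {F | hG.IsImplicativeFilter F ∧ D ⊆ F ∧ ∀ a : H, a ∉ P → f a ∉ F} with hS
  have hDS : D ∈ S := ⟨hG.genMem_filter _, subset_rfl, hdisj⟩
  have hchain : ∀ c ⊆ S, IsChain (· ⊆ ·) c → c.Nonempty →
      ∃ ub ∈ S, ∀ s ∈ c, s ⊆ ub := by
    intro c hcS hchain ⟨F0, hF0⟩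
    refine ⟨⋃₀ c, ⟨?_, ?_, ?_⟩, fun s hs => Set.subset_sUnion_of_mem hs⟩
    · constructor
      · exact ⟨F0, hF0, (hcS hF0).1.1⟩
      · rintro a b ⟨F1, hF1, ha⟩ ⟨F2, hF2, hab⟩
        rcases hchain.total hF1 hF2 with h | h
        · exact ⟨F2, hF2, (hcS hF2).1.2 a b (h ha) hab⟩
        · exact ⟨F1, hF1, (hcS hF1).1.2 a b ha (h hab)⟩
    · exact ((hcS hF0).2.1).trans (Set.subset_sUnion_of_mem hF0)
    · rintro a haP ⟨F1, hF1, haF⟩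
      exact (hcS hF1).2.2 a haP haF
  obtain ⟨Q, hDQ, hQmax⟩ := zorn_subset_nonempty S hchain D hDS
  obtain ⟨hQfilt, hDQ', hQB⟩ := hQmax.1
  have hfPQ : f '' P ⊆ Q := fun x hx =>
    hDQ' (hG.subset_genMem _ (Or.inr hx))
  have hIQ : I ⊆ Q := fun x hx => hDQ' (hG.subset_genMem _ (Or.inl hx))
  obtain ⟨a0, ha0⟩ := Set.ne_univ_iff_exists_notMem P |>.1 hP.2.1
  refine ⟨Q, ⟨hQfilt, ?_, ?_⟩, hIQ, ?_⟩
  · intro hQu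
    exact hQB a0 ha0 (hQu ▸ Set.mem_univ _)
  · intro F₁ F₂ hF₁ hF₂ hQeq
    by_contra hc
    push_neg at hc
    obtain ⟨hne1, hne2⟩ := hc
    have hQ1 : Q ⊆ F₁ := hQeq ▸ Set.inter_subset_left
    have hQ2 : Q ⊆ F₂ := hQeq ▸ Set.inter_subset_right
    have hex1 : ∃ a : H, a ∉ P ∧ f a ∈ F₁ := by
      by_contra hcl
      push_neg at hcl
      exact hne1 (subset_antisymm hQ1
        (hQmax.2 ⟨hF₁, hDQ'.trans hQ1, hcl⟩ hQ1))
    have hex2 : ∃ a : H, a ∉ P ∧ f a ∈ F₂ := by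
      by_contra hcl
      push_neg at hcl
      exact hne2 (subset_antisymm hQ2
        (hQmax.2 ⟨hF₂, hDQ'.trans hQ2, hcl⟩ hQ2))
    obtain ⟨a1, ha1P, ha1⟩ := hex1
    obtain ⟨a2, ha2P, ha2⟩ := hex2
    obtain ⟨c, hcP, hc1, hc2⟩ := hH.irr_directed hP ha1P ha2P
    have hfc1 : f c ∈ F₁ := by
      have : hG.imp (f a1) (f c) ∈ F₁ := by
        rw [← hf.2]; exact hQ1 (hfPQ ⟨_, hc1, rfl⟩)
      exact hF₁.2 _ _ ha1 this
    have hfc2 : f c ∈ F₂ := by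
      have : hG.imp (f a2) (f c) ∈ F₂ := by
        rw [← hf.2]; exact hQ2 (hfPQ ⟨_, hc2, rfl⟩)
      exact hF₂.2 _ _ ha2 this
    exact hQB c hcP (hQeq ▸ ⟨hfc1, hfc2⟩)
  · ext x
    simp only [Set.mem_preimage]
    constructor
    · intro hx
      by_contra hxP
      exact hQB x hxP hx
    · intro hx
      exact hfPQ ⟨x, hx, rfl⟩

end HilbertAlgebra

theorem stmt_16 {H G : Type*} (hH : HilbertAlgebra H) (hG : HilbertAlgebra G) (f : H → G)
    (hf : hH.IsHom hG f) (I : Set G) (hI : I ∈ hG.XStar)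
    (J : Set H) (hJ : J ∈ hH.XStar) (hIJ : f ⁻¹' I ⊆ J) :
    ∃ K : Set G, K ∈ hG.XStar ∧ I ⊆ K ∧ f ⁻¹' K = J := by
  obtain ⟨SI, _, hSIne, hSIirr, hIeq⟩ := hI
  have hIfilt : hG.IsImplicativeFilter I := by
    rw [hIeq]
    exact hG.sInter_filter hSIne fun F hF => (hSIirr F hF).1
  obtain ⟨S, hSfin, hSne, hSirr, rfl⟩ := hJ
  have hmain : ∀ P : Set H, ∃ Q : Set G, P ∈ S →
      hG.IsIrreducible Q ∧ I ⊆ Q ∧ f ⁻¹' Q = P := by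
    intro P
    by_cases hPS : P ∈ S
    · obtain ⟨Q, h⟩ := HilbertAlgebra.key_ext hH hG f hf hIfilt (hSirr P hPS)
        (fun x hx => (hIJ hx) P hPS)
      exact ⟨Q, fun _ => h⟩
    · exact ⟨∅, fun h => absurd h hPS⟩
  choose g hg using hmain
  refine ⟨⋂₀ (g '' S), ?_, ?_, ?_⟩
  · refine ⟨g '' S, hSfin.image g, hSne.image g, ?_, rfl⟩
    rintro Q ⟨P, hP, rfl⟩
    exact (hg P hP).1
  · intro x hx
    rintro Q ⟨P, hP, rfl⟩
    exact (hg P hP).2.1 hx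
  · ext x
    simp only [Set.mem_preimage, Set.mem_sInter]
    constructor
    · intro h P hP
      have hx : f x ∈ g P := h (g P) ⟨P, hP, rfl⟩
      have := (hg P hP).2.2
      rw [← this]
      exact hx
    · rintro h Q ⟨P, hP, rfl⟩
      have : x ∈ f ⁻¹' (g P) := by rw [(hg P hP).2.2]; exact h P hP
      exact this
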